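/- Let Ω be a first-order signature containing at least one constant symbol, let S be a set of ground atoms over Ω (no equality atoms), and let I_S be the least Herbrand model of S. Let φ be a sentence of the form (∃x₁)⋯(∃x_k) ⋁_{i=1}^m ⋀_{j=1}^{n_i} A_{ij} where each A_{ij} is an atomic formula with free variables among x₁,…,x_k. If I_S ⊨ φ, then φ is a logical consequence of S, i.e., every Ω-structure satisfying all atoms of S satisfies φ. -/
import Mathlib


open FirstOrder FirstOrder.Language

universe u v w

/-- A ground atom over the signature `L`: a predicate symbol applied to ground terms
(no equality atoms). -/
structure GroundAtom (L : FirstOrder.Language.{u, v}) where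
  arity : ℕ
  rel : L.Relations arity
  args : Fin arity → L.Term Empty

/-- The ground atom `a` holds in the `L`-structure `M` (with structure `si`). -/
def GroundAtom.HoldsIn {L : FirstOrder.Language.{u, v}} (a : GroundAtom L)
    (M : Type w) (si : L.Structure M) : Prop :=
  letI := si
  Structure.RelMap a.rel fun i => (a.args i).realize (Empty.elim : Empty → M)

/-- The least Herbrand model of a set `S` of ground atoms: the domain is the set of
ground terms, function symbols act syntactically, and a predicate holds of a tuple of
ground terms exactly when the corresponding atom belongs to `S`. -/
def herbrandStructure (L : FirstOrder.Language.{u, v}) (S : Set (GroundAtom L)) :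
    L.Structure (L.Term Empty) where
  funMap := fun f ts => Term.func f ts
  RelMap := fun {n} R ts => (⟨n, R, ts⟩ : GroundAtom L) ∈ S

/-- An atomic formula with free variables among `x₁, …, x_k` (represented by `Fin k`):
either a predicate symbol applied to terms, or an equation between terms. -/
inductive FAtom (L : FirstOrder.Language.{u, v}) (k : ℕ) where
  | rel : ∀ {n : ℕ}, L.Relations n → (Fin n → L.Term (Fin k)) → FAtom L k
  | eq : L.Term (Fin k) → L.Term (Fin k) → FAtom L k

/-- Tarskian satisfaction of an atom under a valuation `v` of the variables. -/
def FAtom.Realize {L : FirstOrder.Language.{u, v}} {k : ℕ} {M : Type w} [L.Structure M]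
    (v : Fin k → M) : FAtom L k → Prop
  | .rel R ts => Structure.RelMap R fun i => (ts i).realize v
  | .eq t₁ t₂ => t₁.realize v = t₂.realize v

/-- `M ⊨ (∃x₁)⋯(∃x_k) ⋁_{i=1}^m ⋀_{j=1}^{n_i} A i j`, the existential closure of a
positive boolean combination of atoms. -/
def SatECPBC {L : FirstOrder.Language.{u, v}} {k m : ℕ} {ni : Fin m → ℕ}
    (A : ∀ i : Fin m, Fin (ni i) → FAtom L k) (M : Type w) [L.Structure M] : Prop :=
  ∃ v : Fin k → M, ∃ i : Fin m, ∀ j : Fin (ni i), (A i j).Realize v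

lemma herbrand_realize_eq_subst {L : FirstOrder.Language.{u, v}} (S : Set (GroundAtom L))
    {k : ℕ} (v : Fin k → L.Term Empty) (t : L.Term (Fin k)) :
    (letI := herbrandStructure L S; Term.realize v t) = t.subst v := by
  induction t with
  | var i => rfl
  | func f ts ih => simp only [Term.realize, Term.subst]; exact congrArg _ (funext ih)

/-- If the least Herbrand model of a set `S` of ground atoms (over a signature with at
least one constant) satisfies the existential closure `φ` of a positive boolean
combination of atoms, then `φ` is a logical consequence of `S`: every structure
satisfying all atoms of `S` satisfies `φ`. -/
theorem herbrand_sat_implies_logical_consequence (L : FirstOrder.Language.{u, v})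
    (hconst : Nonempty L.Constants) (S : Set (GroundAtom L))
    {k m : ℕ} {ni : Fin m → ℕ} (A : ∀ i : Fin m, Fin (ni i) → FAtom L k)
    (hI : @SatECPBC L k m ni A (L.Term Empty) (herbrandStructure L S)) :
    ∀ (B : Type w) (sb : L.Structure B), (∀ a ∈ S, a.HoldsIn B sb) →
      @SatECPBC L k m ni A B sb := by
  letI hs := herbrandStructure L S
  intro B sb hS
  obtain ⟨v, i, hv⟩ := hI
  refine ⟨fun x => (v x).realize Empty.elim, i, fun j => ?_⟩
  have h := hv j
  cases hA : A i j with
  | rel R ts =>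
    rw [hA] at h
    have h' : (⟨_, R, fun l => Term.realize (M := L.Term Empty)
        (L := L) v (ts l)⟩ : GroundAtom L) ∈ S := h
    rw [show (fun l => Term.realize (M := L.Term Empty) (L := L) v (ts l))
        = fun l => (ts l).subst v from funext fun l => herbrand_realize_eq_subst S v (ts l)]
        at h'
    have hB := hS _ h'
    unfold GroundAtom.HoldsIn at hB
    simp only [Term.realize_subst] at hB
    exact hB
  | eq t₁ t₂ =>
    rw [hA] at h
    simp only [FAtom.Realize] at h ⊢
    rw [herbrand_realize_eq_subst S v t₁, herbrand_realize_eq_subst S v t₂] at h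
    rw [← Term.realize_subst, ← Term.realize_subst, h]
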